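/- arXiv:1810.12486 — 2 statements merged into one kernel-verified Lean document; each statement's English description precedes it below -/
import Mathlib

section
/- Let R, r > 0. Let f_R, f_{-r} ∈ L¹(ℝ;ℂ) ∩ L²(ℝ;ℂ) with ∫_ℝ f_R + ∫_ℝ f_{-r} = 0. Then for every x ∈ ℝ with x > 1/(2R) or x < -1/(2r), and every y ∈ ℝ, (1/(4π)) ∫_ℝ [ ln((x - 1/(2R))² + (y-t)²) - ln((1/(2R))² + t²) ] f_R(t) dt + (1/(4π)) ∫_ℝ [ ln((x + 1/(2r))² + (y-t)²) - ln((1/(2r))² + t²) ] f_{-r}(t) dt = -(1/(4π)) ∫_ℝ (1/|k|) [ (e^{-|k|·|x - 1/(2R)|} e^{iky} - e^{-|k|/(2R)}) f̂_R(k) + (e^{-|k|·|x + 1/(2r)|} e^{iky} - e^{-|k|/(2r)}) f̂_{-r}(k) ] dk, where both sides are absolutely convergent integrals. -/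
open MeasureTheory Set Real

noncomputable section

/-- The unnormalized Fourier transform `ĝ(k) = ∫ g(t) e^{-ikt} dt`. -/
def fourierHat (g : ℝ → ℂ) (k : ℝ) : ℂ :=
  ∫ t : ℝ, g t * Complex.exp (-(Complex.I * k * t))

open Filter


lemma myInt_exp_abs {m : ℝ} (hm : 0 < m) :
    Integrable (fun k : ℝ => Real.exp (-(m * |k|))) := by
  have h1 : IntegrableOn (fun k : ℝ => Real.exp (-(m * |k|))) (Ioi 0) := by
    apply (exp_neg_integrableOn_Ioi 0 hm).congr_fun ?_ measurableSet_Ioi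
    intro k hk
    show Real.exp (-m * k) = Real.exp (-(m * |k|))
    rw [abs_of_pos hk]; ring_nf
  rw [← integrableOn_univ, ← @Iio_union_Ici _ _ (0 : ℝ), integrableOn_union,
    integrableOn_Ici_iff_integrableOn_Ioi]
  refine ⟨?_, h1⟩
  rw [← (Measure.measurePreserving_neg (volume : Measure ℝ)).integrableOn_comp_preimage
      (Homeomorph.neg ℝ).measurableEmbedding]
  simpa [Function.comp_def, abs_neg] using h1

lemma myInt_cexp {s : ℂ} (hs : 0 < s.re) :
    IntegrableOn (fun k : ℝ => Complex.exp (-(k * s))) (Ioi 0) ∧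
      ∫ k in Ioi (0:ℝ), Complex.exp (-(k * s)) = 1 / s := by
  have hs0 : s ≠ 0 := fun h => by simp [h] at hs
  have hnorm : ∀ k : ℝ, ‖Complex.exp (-(k * s))‖ = Real.exp (-(s.re * k)) := by
    intro k
    rw [Complex.norm_exp]
    congr 1
    simp [Complex.mul_re]; ring
  have hbd : IntegrableOn (fun k : ℝ => Real.exp (-(s.re * k))) (Ioi 0) := by
    apply (exp_neg_integrableOn_Ioi 0 hs).congr_fun ?_ measurableSet_Ioi
    intro k _
    show Real.exp (-s.re * k) = Real.exp (-(s.re * k))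
    ring_nf
  have hint : IntegrableOn (fun k : ℝ => Complex.exp (-(k * s))) (Ioi 0) := by
    refine Integrable.mono' hbd
      ((Complex.continuous_exp.comp (by fun_prop)).aestronglyMeasurable) ?_
    filter_upwards with k using le_of_eq (hnorm k)
  refine ⟨hint, ?_⟩
  have hderiv : ∀ k ∈ Ioi (0:ℝ),
      HasDerivAt (fun k : ℝ => -(1/s) * Complex.exp (-(k * s))) (Complex.exp (-(k * s))) k := by
    intro k _
    have h1 : HasDerivAt (fun k : ℝ => -((k : ℂ) * s)) (-s) k := by
      have h := ((Complex.ofRealCLM.hasDerivAt (x := k)).mul_const s).neg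
      simp only [Complex.ofRealCLM_apply, Complex.ofReal_one, one_mul] at h
      exact h
    have := (h1.cexp).const_mul (-(1/s))
    refine this.congr_deriv ?_
    linear_combination (Complex.exp (-(k * s))) * inv_mul_cancel₀ hs0
  have htend : Tendsto (fun k : ℝ => -(1/s) * Complex.exp (-(k * s))) atTop (nhds 0) := by
    rw [show (0:ℂ) = -(1/s) * 0 by ring]
    apply Tendsto.const_mul
    rw [tendsto_zero_iff_norm_tendsto_zero]
    simp_rw [hnorm]
    have h2 : Tendsto (fun k : ℝ => s.re * k) atTop atTop :=
      Tendsto.const_mul_atTop hs tendsto_id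
    have := Real.tendsto_exp_neg_atTop_nhds_zero.comp h2
    simpa [Function.comp_def] using this
  have := integral_Ioi_of_hasDerivAt_of_tendsto
    (f := fun k : ℝ => -(1/s) * Complex.exp (-(k * s)))
    (f' := fun k : ℝ => Complex.exp (-(k * s)))
    (a := 0) ?_ hderiv hint htend
  · rw [this]; simp
  · exact (Continuous.continuousWithinAt (by fun_prop))


-- segment representation
lemma mySeg (z w : ℂ) {k : ℝ} (hk : 0 < k) :
    (Complex.exp (-(k * z)) - Complex.exp (-(k * w))) / k
      = ∫ u in (0:ℝ)..1, (w - z) * Complex.exp (-(k * (z + u * (w - z)))) := by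
  have hk0 : (k : ℂ) ≠ 0 := Complex.ofReal_ne_zero.mpr hk.ne'
  have hderiv : ∀ u ∈ uIcc (0:ℝ) 1,
      HasDerivAt (fun u : ℝ => -(1/(k:ℂ)) * Complex.exp (-(k * (z + u * (w - z)))))
        ((w - z) * Complex.exp (-(k * (z + u * (w - z))))) u := by
    intro u _
    have h1 : HasDerivAt (fun u : ℝ => -((k:ℂ) * (z + u * (w - z)))) (-(k * (w - z))) u := by
      have : HasDerivAt (fun u : ℝ => z + (u:ℂ) * (w - z)) (w - z) u := by
        simpa using ((Complex.ofRealCLM.hasDerivAt (x := u)).mul_const (w - z)).const_add z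
      exact (this.const_mul (k:ℂ)).neg
    have := (h1.cexp).const_mul (-(1/(k:ℂ)))
    refine this.congr_deriv ?_
    linear_combination ((w - z) * Complex.exp (-(k * (z + u * (w - z))))) * inv_mul_cancel₀ hk0
  have hcont : IntervalIntegrable
      (fun u : ℝ => (w - z) * Complex.exp (-(k * (z + u * (w - z))))) volume 0 1 :=
    (Continuous.intervalIntegrable (by fun_prop)) _ _
  rw [intervalIntegral.integral_eq_sub_of_hasDerivAt hderiv hcont]
  simp only [Complex.ofReal_one, Complex.ofReal_zero, one_mul, zero_mul, add_zero]
  field_simp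
  ring_nf

-- norm bound
lemma myBound (z w : ℂ) {m : ℝ} (hm : 0 < m) (hz : m ≤ z.re) (hw : m ≤ w.re)
    {k : ℝ} (hk : 0 < k) :
    ‖(Complex.exp (-(k * z)) - Complex.exp (-(k * w))) / k‖
      ≤ ‖w - z‖ * Real.exp (-(m * k)) := by
  rw [mySeg z w hk]
  have := intervalIntegral.norm_integral_le_of_norm_le_const
    (C := ‖w - z‖ * Real.exp (-(m * k)))
    (f := fun u : ℝ => (w - z) * Complex.exp (-(k * (z + u * (w - z)))))
    (a := 0) (b := 1) ?_
  · simpa using this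
  · intro u hu
    rw [Set.uIoc_of_le (by norm_num : (0:ℝ) ≤ 1)] at hu
    have hre : (-(↑k * (z + ↑u * (w - z)))).re = -(k * (z.re + u * (w.re - z.re))) := by
      simp [Complex.mul_re, Complex.add_re, Complex.sub_re, Complex.ofReal_re,
        Complex.ofReal_im, Complex.mul_im] <;> ring
    have h1 : m ≤ z.re + u * (w.re - z.re) := by nlinarith [hu.1, hu.2]
    have h2 : (-(↑k * (z + ↑u * (w - z)))).re ≤ -(m * k) := by rw [hre]; nlinarith
    calc ‖(w - z) * Complex.exp (-(↑k * (z + ↑u * (w - z))))‖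
        = ‖w - z‖ * Real.exp ((-(↑k * (z + ↑u * (w - z)))).re) := by
          rw [norm_mul, Complex.norm_exp]
      _ ≤ ‖w - z‖ * Real.exp (-(m * k)) :=
          mul_le_mul_of_nonneg_left (Real.exp_le_exp.mpr h2) (norm_nonneg _)

-- complex Frullani on (0, ∞)
lemma myFrullani (z w : ℂ) (hz : 0 < z.re) (hw : 0 < w.re) :
    IntegrableOn (fun k : ℝ => (Complex.exp (-(k * z)) - Complex.exp (-(k * w))) / k) (Ioi 0) ∧
      ∫ k in Ioi (0:ℝ), (Complex.exp (-(k * z)) - Complex.exp (-(k * w))) / k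
        = Complex.log w - Complex.log z := by
  set m : ℝ := min z.re w.re with hmdef
  have hm : 0 < m := lt_min hz hw
  have hmz : m ≤ z.re := min_le_left _ _
  have hmw : m ≤ w.re := min_le_right _ _
  have hbd : IntegrableOn (fun k : ℝ => ‖w - z‖ * Real.exp (-(m * k))) (Ioi 0) :=
    ((exp_neg_integrableOn_Ioi 0 hm).congr_fun
      (fun k _ => by show Real.exp (-m * k) = _; ring_nf) measurableSet_Ioi).const_mul _
  have hmeas : AEStronglyMeasurable
      (fun k : ℝ => (Complex.exp (-(k * z)) - Complex.exp (-(k * w))) / k)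
      (volume.restrict (Ioi 0)) := by
    apply Measurable.aestronglyMeasurable
    fun_prop
  have hint : IntegrableOn
      (fun k : ℝ => (Complex.exp (-(k * z)) - Complex.exp (-(k * w))) / k) (Ioi 0) := by
    refine Integrable.mono' hbd hmeas ?_
    filter_upwards [ae_restrict_mem measurableSet_Ioi] with k hk
    exact myBound z w hm hmz hmw hk
  refine ⟨hint, ?_⟩
  -- Fubini
  set P : ℝ × ℝ → ℂ := fun p => (w - z) * Complex.exp (-(p.1 * (z + p.2 * (w - z)))) with hP
  have hPint : Integrable P ((volume.restrict (Ioi 0)).prod (volume.restrict (Ioc 0 1))) := by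
    refine Integrable.mono' (g := fun p : ℝ × ℝ => (‖w - z‖ * Real.exp (-(m * p.1))) * 1)
      ?_ ?_ ?_
    · exact hbd.mul_prod (integrableOn_const (C := (1:ℝ)) measure_Ioc_lt_top.ne)
    · exact (Continuous.aestronglyMeasurable (by fun_prop))
    · rw [Measure.prod_restrict]
      filter_upwards [ae_restrict_mem (measurableSet_Ioi.prod measurableSet_Ioc)] with p hp
      obtain ⟨hp1, hp2⟩ := hp
      have hre : (-(↑p.1 * (z + ↑p.2 * (w - z)))).re
          = -(p.1 * (z.re + p.2 * (w.re - z.re))) := by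
        simp [Complex.mul_re, Complex.add_re, Complex.sub_re, Complex.ofReal_re,
          Complex.ofReal_im, Complex.mul_im] <;> ring
      have h1 : m ≤ z.re + p.2 * (w.re - z.re) := by nlinarith [hp2.1.le, hp2.2]
      have h2 : (-(↑p.1 * (z + ↑p.2 * (w - z)))).re ≤ -(m * p.1) := by
        rw [hre]; nlinarith [(Set.mem_Ioi.mp hp1).le]
      calc ‖P p‖ = ‖w - z‖ * Real.exp ((-(↑p.1 * (z + ↑p.2 * (w - z)))).re) := by
            rw [hP]; rw [norm_mul, Complex.norm_exp]
        _ ≤ ‖w - z‖ * Real.exp (-(m * p.1)) * 1 := by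
            rw [mul_one]
            exact mul_le_mul_of_nonneg_left (Real.exp_le_exp.mpr h2) (norm_nonneg _)
  have hre_pos : ∀ u ∈ Ioc (0:ℝ) 1, 0 < (z + (u:ℂ) * (w - z)).re := by
    intro u hu
    have : (z + (u:ℂ) * (w - z)).re = z.re + u * (w.re - z.re) := by
      simp [Complex.add_re, Complex.mul_re, Complex.sub_re, Complex.ofReal_re,
        Complex.ofReal_im, Complex.sub_im]
    rw [this]
    nlinarith [hu.1, hu.2, hm]
  calc ∫ k in Ioi (0:ℝ), (Complex.exp (-(k * z)) - Complex.exp (-(k * w))) / k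
      = ∫ k in Ioi (0:ℝ), ∫ u in Ioc (0:ℝ) 1, P (k, u) := by
        refine setIntegral_congr_fun measurableSet_Ioi (fun k hk => ?_)
        rw [mySeg z w hk, intervalIntegral.integral_of_le (by norm_num : (0:ℝ) ≤ 1)]
    _ = ∫ u in Ioc (0:ℝ) 1, ∫ k in Ioi (0:ℝ), P (k, u) := integral_integral_swap hPint
    _ = ∫ u in Ioc (0:ℝ) 1, (w - z) * (1 / (z + (u:ℂ) * (w - z))) := by
        refine setIntegral_congr_fun measurableSet_Ioc (fun u hu => ?_)
        simp only [hP]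
        rw [integral_const_mul, (myInt_cexp (s := z + (u:ℂ) * (w - z)) (hre_pos u hu)).2]
    _ = Complex.log w - Complex.log z := by
        rw [← intervalIntegral.integral_of_le (by norm_num : (0:ℝ) ≤ 1)]
        have hne : ∀ u ∈ uIcc (0:ℝ) 1, z + (u:ℂ) * (w - z) ≠ 0 := by
          intro u hu
          rw [Set.uIcc_of_le (by norm_num : (0:ℝ) ≤ 1)] at hu
          intro h
          have : (z + (u:ℂ) * (w - z)).re = z.re + u * (w.re - z.re) := by
            simp [Complex.add_re, Complex.mul_re, Complex.sub_re, Complex.ofReal_re,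
              Complex.ofReal_im, Complex.sub_im]
          have h0 : (z + (u:ℂ) * (w - z)).re = 0 := by rw [h]; simp
          rw [this] at h0
          nlinarith [hu.1, hu.2, hm, hmz, hmw]
        have hderiv : ∀ u ∈ uIcc (0:ℝ) 1,
            HasDerivAt (fun u : ℝ => Complex.log (z + (u:ℂ) * (w - z)))
              ((w - z) * (1 / (z + (u:ℂ) * (w - z)))) u := by
          intro u hu
          have haff : HasDerivAt (fun u : ℝ => z + (u:ℂ) * (w - z)) (w - z) u := by
            simpa using ((Complex.ofRealCLM.hasDerivAt (x := u)).mul_const (w - z)).const_add z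
          have hslit : z + (u:ℂ) * (w - z) ∈ Complex.slitPlane := by
            left
            rw [Set.uIcc_of_le (by norm_num : (0:ℝ) ≤ 1)] at hu
            have : (z + (u:ℂ) * (w - z)).re = z.re + u * (w.re - z.re) := by
              simp [Complex.add_re, Complex.mul_re, Complex.sub_re, Complex.ofReal_re,
                Complex.ofReal_im, Complex.sub_im]
            rw [this]
            nlinarith [hu.1, hu.2, hm, hmz, hmw]
          have := haff.clog_real hslit
          rwa [div_eq_mul_one_div] at this
        have hii : IntervalIntegrable
            (fun u : ℝ => (w - z) * (1 / (z + (u:ℂ) * (w - z)))) volume 0 1 := by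
          apply ContinuousOn.intervalIntegrable
          apply ContinuousOn.mul continuousOn_const
          apply ContinuousOn.div continuousOn_const (by fun_prop)
          exact hne
        rw [intervalIntegral.integral_eq_sub_of_hasDerivAt hderiv hii]
        norm_num

def Kker (a c b d : ℝ) (k : ℝ) : ℂ :=
  ((1/|k| : ℝ) : ℂ) * (((Real.exp (-(|k| * a)) : ℝ) : ℂ) * Complex.exp (Complex.I * k * b)
    - ((Real.exp (-(|k| * c)) : ℝ) : ℂ) * Complex.exp (Complex.I * k * d))

lemma myKkerEq (a c b d : ℝ) {k : ℝ} (hk : 0 < k) :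
    Kker a c b d k
      = (Complex.exp (-(k * ((a:ℂ) - b * Complex.I))) -
          Complex.exp (-(k * ((c:ℂ) - d * Complex.I)))) / k := by
  unfold Kker
  rw [abs_of_pos hk]
  have h1 : Complex.exp (-(k * ((a:ℂ) - b * Complex.I)))
      = ((Real.exp (-(k * a)) : ℝ) : ℂ) * Complex.exp (Complex.I * k * b) := by
    rw [Complex.ofReal_exp, ← Complex.exp_add]
    congr 1
    push_cast
    ring
  have h2 : Complex.exp (-(k * ((c:ℂ) - d * Complex.I)))
      = ((Real.exp (-(k * c)) : ℝ) : ℂ) * Complex.exp (Complex.I * k * d) := by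
    rw [Complex.ofReal_exp, ← Complex.exp_add]
    congr 1
    push_cast
    ring
  rw [h1, h2]
  push_cast
  field_simp

lemma myKkerNeg (a c b d k : ℝ) : Kker a c b d (-k) = Kker a c (-b) (-d) k := by
  unfold Kker
  rw [abs_neg]
  have h1 : Complex.I * ((-k : ℝ):ℂ) * (b:ℂ) = Complex.I * (k:ℂ) * ((-b:ℝ):ℂ) := by
    push_cast; ring
  have h2 : Complex.I * ((-k : ℝ):ℂ) * (d:ℂ) = Complex.I * (k:ℂ) * ((-d:ℝ):ℂ) := by
    push_cast; ring
  rw [h1, h2]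

lemma myKker (a c b d : ℝ) (ha : 0 < a) (hc : 0 < c) :
    Integrable (Kker a c b d) ∧
    (∫ k, Kker a c b d k = ((Real.log (c^2+d^2) - Real.log (a^2+b^2) : ℝ) : ℂ)) ∧
    (∀ k, ‖Kker a c b d k‖ ≤ (|c - a| + |b - d|) * Real.exp (-(min a c * |k|))) := by
  set m : ℝ := min a c with hmdef
  have hm : 0 < m := lt_min ha hc
  set z : ℂ := (a:ℂ) - b * Complex.I with hzdef
  set w : ℂ := (c:ℂ) - d * Complex.I with hwdef
  set z' : ℂ := (a:ℂ) - ((-b : ℝ):ℂ) * Complex.I with hz'def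
  set w' : ℂ := (c:ℂ) - ((-d : ℝ):ℂ) * Complex.I with hw'def
  have hzre : z.re = a := by simp [hzdef]
  have hwre : w.re = c := by simp [hwdef]
  have hz're : z'.re = a := by simp [hz'def]
  have hw're : w'.re = c := by simp [hw'def]
  have hz : 0 < z.re := by rw [hzre]; exact ha
  have hw : 0 < w.re := by rw [hwre]; exact hc
  have hz' : 0 < z'.re := by rw [hz're]; exact ha
  have hw' : 0 < w'.re := by rw [hw're]; exact hc
  have hmz : m ≤ z.re := by rw [hzre]; exact min_le_left _ _
  have hmw : m ≤ w.re := by rw [hwre]; exact min_le_right _ _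
  have hmz' : m ≤ z'.re := by rw [hz're]; exact min_le_left _ _
  have hmw' : m ≤ w'.re := by rw [hw're]; exact min_le_right _ _
  have hnorm : ‖w - z‖ ≤ |c - a| + |b - d| := by
    have : w - z = ((c - a : ℝ):ℂ) + ((b - d : ℝ):ℂ) * Complex.I := by
      rw [hzdef, hwdef]; push_cast; ring
    rw [this]
    refine le_trans (Complex.norm_le_abs_re_add_abs_im _) (le_of_eq ?_)
    simp [Complex.add_re, Complex.add_im]
  have hnorm' : ‖w' - z'‖ ≤ |c - a| + |b - d| := by
    have : w' - z' = ((c - a : ℝ):ℂ) + ((d - b : ℝ):ℂ) * Complex.I := by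
      rw [hz'def, hw'def]; push_cast; ring
    rw [this]
    refine le_trans (Complex.norm_le_abs_re_add_abs_im _) (le_of_eq ?_)
    simp [Complex.add_re, Complex.add_im, abs_sub_comm d b]
  have hbound : ∀ k, ‖Kker a c b d k‖ ≤ (|c - a| + |b - d|) * Real.exp (-(m * |k|)) := by
    intro k
    rcases lt_trichotomy k 0 with hk | hk | hk
    · have hk'pos : 0 < -k := neg_pos.mpr hk
      have e : Kker a c b d k = Kker a c (-b) (-d) (-k) := by
        conv_lhs => rw [show k = -(-k) by ring, myKkerNeg]
      rw [e, myKkerEq a c (-b) (-d) hk'pos, abs_of_neg hk]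
      exact le_trans (myBound z' w' hm hmz' hmw' hk'pos)
        (mul_le_mul_of_nonneg_right hnorm' (Real.exp_nonneg _))
    · subst hk
      simp [Kker]
      positivity
    · rw [myKkerEq a c b d hk]
      refine le_trans (myBound z w hm hmz hmw hk) ?_
      rw [abs_of_pos hk]
      exact mul_le_mul_of_nonneg_right hnorm (Real.exp_nonneg _)
  have hmeas : AEStronglyMeasurable (Kker a c b d) volume := by
    apply Measurable.aestronglyMeasurable
    unfold Kker
    fun_prop
  have hint : Integrable (Kker a c b d) := by
    refine Integrable.mono' (((myInt_exp_abs hm).const_mul (|c - a| + |b - d|))) hmeas ?_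
    filter_upwards with k using hbound k
  refine ⟨hint, ?_, hbound⟩
  have hIoi : ∫ k in Ioi (0:ℝ), Kker a c b d k = Complex.log w - Complex.log z := by
    rw [setIntegral_congr_fun measurableSet_Ioi (fun k hk => myKkerEq a c b d hk)]
    exact (myFrullani z w hz hw).2
  have hIic : ∫ k in Iic (0:ℝ), Kker a c b d k = Complex.log w' - Complex.log z' := by
    rw [← neg_zero, ← integral_comp_neg_Ioi 0 (Kker a c b d)]
    have : ∀ k ∈ Ioi (0:ℝ), Kker a c b d (-k) = Kker a c (-b) (-d) k :=
      fun k _ => myKkerNeg a c b d k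
    rw [setIntegral_congr_fun measurableSet_Ioi this,
      setIntegral_congr_fun measurableSet_Ioi (fun k hk => myKkerEq a c (-b) (-d) hk)]
    exact (myFrullani z' w' hz' hw').2
  have hsplit := intervalIntegral.integral_Iic_add_Ioi (b := (0:ℝ)) hint.integrableOn hint.integrableOn
  rw [← hsplit, hIoi, hIic]
  have hargw : w.arg ≠ Real.pi := by
    intro h
    have := (Complex.arg_eq_pi_iff.mp h).1
    rw [hwre] at this; linarith
  have hargz : z.arg ≠ Real.pi := by
    intro h
    have := (Complex.arg_eq_pi_iff.mp h).1
    rw [hzre] at this; linarith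
  have hconjw : w' = starRingEnd ℂ w := by
    rw [hwdef, hw'def]
    apply Complex.ext <;> simp
  have hconjz : z' = starRingEnd ℂ z := by
    rw [hzdef, hz'def]
    apply Complex.ext <;> simp
  have hlogw : Complex.log w' + Complex.log w = ((2 * Real.log (‖w‖) : ℝ) : ℂ) := by
    rw [hconjw, Complex.log_conj w hargw]
    rw [add_comm, Complex.add_conj, Complex.log_re]
  have hlogz : Complex.log z' + Complex.log z = ((2 * Real.log (‖z‖) : ℝ) : ℂ) := by
    rw [hconjz, Complex.log_conj z hargz]
    rw [add_comm, Complex.add_conj, Complex.log_re]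
  have habsw : 2 * Real.log (‖w‖) = Real.log (c^2 + d^2) := by
    have e1 : Real.log (‖w‖ ^ 2) = 2 * Real.log (‖w‖) := by
      rw [Real.log_pow]; norm_num
    have e2 : ‖w‖ ^ 2 = c^2 + d^2 := by
      rw [Complex.sq_norm, Complex.normSq_apply, hwre, show w.im = -d by simp [hwdef]]; ring
    rw [← e1, e2]
  have habsz : 2 * Real.log (‖z‖) = Real.log (a^2 + b^2) := by
    have e1 : Real.log (‖z‖ ^ 2) = 2 * Real.log (‖z‖) := by
      rw [Real.log_pow]; norm_num
    have e2 : ‖z‖ ^ 2 = a^2 + b^2 := by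
      rw [Complex.sq_norm, Complex.normSq_apply, hzre, show z.im = -b by simp [hzdef]]; ring
    rw [← e1, e2]
  have : (Complex.log w' - Complex.log z') + (Complex.log w - Complex.log z)
      = ((Real.log (c^2+d^2) - Real.log (a^2+b^2) : ℝ) : ℂ) := by
    have e1 : (Complex.log w' - Complex.log z') + (Complex.log w - Complex.log z)
        = (Complex.log w' + Complex.log w) - (Complex.log z' + Complex.log z) := by ring
    rw [e1, hlogw, hlogz, ← habsw, ← habsz]
    push_cast
    ring
  exact this

lemma myPerTerm (a c : ℝ) (ha : 0 < a) (hc : 0 < c) (y : ℝ) (f : ℝ → ℂ)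
    (hf : Integrable f) :
    Integrable (fun t => ((Real.log (a^2 + (y-t)^2) - Real.log (c^2 + t^2) : ℝ):ℂ) * f t) ∧
    Integrable (fun k => Kker a c y 0 k * fourierHat f k) ∧
    (∫ t, ((Real.log (a^2 + (y-t)^2) - Real.log (c^2 + t^2) : ℝ):ℂ) * f t)
      = -∫ k, Kker a c y 0 k * fourierHat f k := by
  set m : ℝ := min a c with hmdef
  have hm : 0 < m := lt_min ha hc
  -- pointwise log identity
  have hlog : ∀ t : ℝ, ((Real.log (a^2 + (y-t)^2) - Real.log (c^2 + t^2) : ℝ):ℂ)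
      = -∫ k, Kker a c (y-t) (-t) k := by
    intro t
    rw [(myKker a c (y-t) (-t) ha hc).2.1, neg_sq]
    push_cast
    ring
  -- uniform bound on the kernel
  have hbd : ∀ (t k : ℝ), ‖Kker a c (y-t) (-t) k‖
      ≤ (|c - a| + |y|) * Real.exp (-(m * |k|)) := by
    intro t k
    have := (myKker a c (y-t) (-t) ha hc).2.2 k
    simpa [sub_neg_eq_add, sub_add_cancel] using this
  -- joint integrability
  have hK2 : Measurable (fun p : ℝ × ℝ => Kker a c (y - p.2) (-p.2) p.1) := by
    unfold Kker
    fun_prop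
  have hGmeas : AEStronglyMeasurable (fun p : ℝ × ℝ => Kker a c (y - p.2) (-p.2) p.1 * f p.2)
      ((volume : Measure ℝ).prod volume) :=
    hK2.aestronglyMeasurable.mul (hf.1.comp_snd)
  have hbdint : Integrable (fun p : ℝ × ℝ => ((|c - a| + |y|) * Real.exp (-(m * |p.1|))) * ‖f p.2‖)
      ((volume : Measure ℝ).prod volume) :=
    ((myInt_exp_abs hm).const_mul (|c - a| + |y|)).mul_prod hf.norm
  have hGint : Integrable (fun p : ℝ × ℝ => Kker a c (y - p.2) (-p.2) p.1 * f p.2)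
      ((volume : Measure ℝ).prod volume) := by
    refine Integrable.mono' hbdint hGmeas ?_
    filter_upwards with p
    rw [norm_mul]
    exact mul_le_mul_of_nonneg_right (hbd p.2 p.1) (norm_nonneg _)
  -- inner t-integral computes to Kker * fourierHat
  have h2 : ∀ k : ℝ, (∫ t, Kker a c (y - t) (-t) k * f t)
      = Kker a c y 0 k * fourierHat f k := by
    intro k
    have e : ∀ t : ℝ, Kker a c (y - t) (-t) k * f t
        = Kker a c y 0 k * (f t * Complex.exp (-(Complex.I * k * t))) := by
      intro t
      unfold Kker
      have e1 : Complex.exp (Complex.I * k * ((y - t : ℝ):ℂ))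
          = Complex.exp (Complex.I * k * (y:ℂ)) * Complex.exp (-(Complex.I * k * t)) := by
        rw [← Complex.exp_add]; congr 1; push_cast; ring
      have e2 : Complex.exp (Complex.I * k * ((-t : ℝ):ℂ))
          = Complex.exp ((0:ℂ)) * Complex.exp (-(Complex.I * k * t)) := by
        rw [← Complex.exp_add]; congr 1; push_cast; ring
      have e3 : Complex.I * (k:ℂ) * ((0:ℝ):ℂ) = 0 := by push_cast; ring
      rw [e1, e2, e3]
      ring
    simp_rw [e]
    rw [integral_const_mul]
    rfl
  -- integrability of the k-integrand
  have h3 : Integrable (fun k => Kker a c y 0 k * fourierHat f k) := by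
    refine (hGint.integral_prod_left).congr ?_
    filter_upwards with k using h2 k
  -- boundedness of the log factor
  have hM : ∀ t : ℝ, ‖((Real.log (a^2 + (y-t)^2) - Real.log (c^2 + t^2) : ℝ):ℂ)‖
      ≤ (|c - a| + |y|) * ∫ k : ℝ, Real.exp (-(m * |k|)) := by
    intro t
    rw [hlog t, norm_neg]
    refine le_trans (norm_integral_le_of_norm_le
      (((myInt_exp_abs hm).const_mul (|c - a| + |y|)))
      (Eventually.of_forall fun k => hbd t k)) ?_
    rw [integral_const_mul]
  have hcont : Continuous fun t : ℝ =>
      ((Real.log (a^2 + (y-t)^2) - Real.log (c^2 + t^2) : ℝ):ℂ) := by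
    apply Complex.continuous_ofReal.comp
    apply Continuous.sub
    · exact Continuous.log (by fun_prop)
        (fun t => (add_pos_of_pos_of_nonneg (pow_pos ha 2) (sq_nonneg _)).ne')
    · exact Continuous.log (by fun_prop)
        (fun t => (add_pos_of_pos_of_nonneg (pow_pos hc 2) (sq_nonneg _)).ne')
  have h1 : Integrable (fun t =>
      ((Real.log (a^2 + (y-t)^2) - Real.log (c^2 + t^2) : ℝ):ℂ) * f t) :=
    hf.bdd_mul hcont.aestronglyMeasurable (Eventually.of_forall hM)
  refine ⟨h1, h3, ?_⟩
  calc ∫ t, ((Real.log (a^2 + (y-t)^2) - Real.log (c^2 + t^2) : ℝ):ℂ) * f t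
      = ∫ t, -(∫ k, Kker a c (y-t) (-t) k * f t) := by
        refine integral_congr_ae (Eventually.of_forall fun t => ?_)
        show ((Real.log (a^2 + (y-t)^2) - Real.log (c^2 + t^2) : ℝ):ℂ) * f t
          = -∫ k, Kker a c (y-t) (-t) k * f t
        rw [hlog t, neg_mul, integral_mul_const]
    _ = -∫ t, ∫ k, Kker a c (y-t) (-t) k * f t := integral_neg _
    _ = -∫ k, ∫ t, Kker a c (y-t) (-t) k * f t := by
        rw [integral_integral_swap (f := fun t k => Kker a c (y - t) (-t) k * f t) hGint.swap]
    _ = -∫ k, Kker a c y 0 k * fourierHat f k := by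
        rw [integral_congr_ae (Eventually.of_forall fun k => h2 k)]


/-- Fourier representation of the single layer potential of the
touching-disks domain `Ω = B_R ∪ B_{-r}` in half-plane coordinates: for mean-zero
weighted densities `f_R, f_{-r} ∈ L¹ ∩ L²` and every point `(x,y)` with `x > 1/(2R)` or
`x < -1/(2r)`, the boundary-integral expression of `S_{∂Ω}[φ](Ψ(x,y))` equals its
frequency-domain expression, all integrals being absolutely convergent. -/
theorem singleLayer_touchingDisks_fourier_representation
    (R r : ℝ) (hR : 0 < R) (hr : 0 < r)
    (fR fmr : ℝ → ℂ)
    (hfR1 : Integrable fR) (hfR2 : MemLp fR 2 (volume : Measure ℝ))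
    (hfmr1 : Integrable fmr) (hfmr2 : MemLp fmr 2 (volume : Measure ℝ))
    (hmean : (∫ t : ℝ, fR t) + (∫ t : ℝ, fmr t) = 0)
    (x y : ℝ) (hx : 1/(2*R) < x ∨ x < -(1/(2*r))) :
    Integrable (fun t : ℝ =>
      ((Real.log ((x - 1/(2*R))^2 + (y - t)^2) - Real.log ((1/(2*R))^2 + t^2) : ℝ) : ℂ)
        * fR t) ∧
    Integrable (fun t : ℝ =>
      ((Real.log ((x + 1/(2*r))^2 + (y - t)^2) - Real.log ((1/(2*r))^2 + t^2) : ℝ) : ℂ)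
        * fmr t) ∧
    Integrable (fun k : ℝ =>
      ((1/|k| : ℝ) : ℂ) *
        (((Real.exp (-(|k| * |x - 1/(2*R)|)) : ℝ) : ℂ) * Complex.exp (Complex.I * k * y)
            - ((Real.exp (-(|k| / (2*R))) : ℝ) : ℂ)) * fourierHat fR k
      + ((1/|k| : ℝ) : ℂ) *
        (((Real.exp (-(|k| * |x + 1/(2*r)|)) : ℝ) : ℂ) * Complex.exp (Complex.I * k * y)
            - ((Real.exp (-(|k| / (2*r))) : ℝ) : ℂ)) * fourierHat fmr k) ∧
    ((1/(4*(π:ℂ))) * ∫ t : ℝ,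
        ((Real.log ((x - 1/(2*R))^2 + (y - t)^2) - Real.log ((1/(2*R))^2 + t^2) : ℝ) : ℂ)
          * fR t)
      + ((1/(4*(π:ℂ))) * ∫ t : ℝ,
        ((Real.log ((x + 1/(2*r))^2 + (y - t)^2) - Real.log ((1/(2*r))^2 + t^2) : ℝ) : ℂ)
          * fmr t)
      = -(1/(4*(π:ℂ))) * ∫ k : ℝ,
          (((1/|k| : ℝ) : ℂ) *
            (((Real.exp (-(|k| * |x - 1/(2*R)|)) : ℝ) : ℂ) * Complex.exp (Complex.I * k * y)
                - ((Real.exp (-(|k| / (2*R))) : ℝ) : ℂ)) * fourierHat fR k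
          + ((1/|k| : ℝ) : ℂ) *
            (((Real.exp (-(|k| * |x + 1/(2*r)|)) : ℝ) : ℂ) * Complex.exp (Complex.I * k * y)
                - ((Real.exp (-(|k| / (2*r))) : ℝ) : ℂ)) * fourierHat fmr k) := by
  have hc1 : (0:ℝ) < 1/(2*R) := by positivity
  have hc2 : (0:ℝ) < 1/(2*r) := by positivity
  have ha1 : (0:ℝ) < |x - 1/(2*R)| := by
    rw [abs_pos, sub_ne_zero]
    rcases hx with h | h
    · exact ne_of_gt h
    · intro he; rw [← he] at hc1; linarith
  have ha2 : (0:ℝ) < |x + 1/(2*r)| := by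
    rw [abs_pos]
    rcases hx with h | h
    · intro he; nlinarith
    · intro he; nlinarith
  obtain ⟨hP1a, hP1b, hP1c⟩ := myPerTerm _ _ ha1 hc1 y fR hfR1
  obtain ⟨hP2a, hP2b, hP2c⟩ := myPerTerm _ _ ha2 hc2 y fmr hfmr1
  have hsq1 : ∀ t : ℝ, (|x - 1/(2*R)|)^2 + (y - t)^2 = (x - 1/(2*R))^2 + (y - t)^2 := by
    intro t; rw [sq_abs]
  have hsq2 : ∀ t : ℝ, (|x + 1/(2*r)|)^2 + (y - t)^2 = (x + 1/(2*r))^2 + (y - t)^2 := by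
    intro t; rw [sq_abs]
  have hterm1 : ∀ k : ℝ, Kker (|x - 1/(2*R)|) (1/(2*R)) y 0 k * fourierHat fR k
      = ((1/|k| : ℝ) : ℂ) *
        (((Real.exp (-(|k| * |x - 1/(2*R)|)) : ℝ) : ℂ) * Complex.exp (Complex.I * k * y)
            - ((Real.exp (-(|k| / (2*R))) : ℝ) : ℂ)) * fourierHat fR k := by
    intro k
    simp only [Kker, Complex.ofReal_zero, mul_zero, Complex.exp_zero, mul_one, mul_one_div]
  have hterm2 : ∀ k : ℝ, Kker (|x + 1/(2*r)|) (1/(2*r)) y 0 k * fourierHat fmr k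
      = ((1/|k| : ℝ) : ℂ) *
        (((Real.exp (-(|k| * |x + 1/(2*r)|)) : ℝ) : ℂ) * Complex.exp (Complex.I * k * y)
            - ((Real.exp (-(|k| / (2*r))) : ℝ) : ℂ)) * fourierHat fmr k := by
    intro k
    simp only [Kker, Complex.ofReal_zero, mul_zero, Complex.exp_zero, mul_one, mul_one_div]
  have hL1 : (fun t : ℝ =>
      ((Real.log ((x - 1/(2*R))^2 + (y - t)^2) - Real.log ((1/(2*R))^2 + t^2) : ℝ) : ℂ)
        * fR t)
      = fun t : ℝ =>
      ((Real.log ((|x - 1/(2*R)|)^2 + (y - t)^2) - Real.log ((1/(2*R))^2 + t^2) : ℝ) : ℂ)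
        * fR t := by
    funext t; rw [hsq1 t]
  have hL2 : (fun t : ℝ =>
      ((Real.log ((x + 1/(2*r))^2 + (y - t)^2) - Real.log ((1/(2*r))^2 + t^2) : ℝ) : ℂ)
        * fmr t)
      = fun t : ℝ =>
      ((Real.log ((|x + 1/(2*r)|)^2 + (y - t)^2) - Real.log ((1/(2*r))^2 + t^2) : ℝ) : ℂ)
        * fmr t := by
    funext t; rw [hsq2 t]
  have hR : (fun k : ℝ =>
      ((1/|k| : ℝ) : ℂ) *
        (((Real.exp (-(|k| * |x - 1/(2*R)|)) : ℝ) : ℂ) * Complex.exp (Complex.I * k * y)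
            - ((Real.exp (-(|k| / (2*R))) : ℝ) : ℂ)) * fourierHat fR k
      + ((1/|k| : ℝ) : ℂ) *
        (((Real.exp (-(|k| * |x + 1/(2*r)|)) : ℝ) : ℂ) * Complex.exp (Complex.I * k * y)
            - ((Real.exp (-(|k| / (2*r))) : ℝ) : ℂ)) * fourierHat fmr k)
      = fun k : ℝ => Kker (|x - 1/(2*R)|) (1/(2*R)) y 0 k * fourierHat fR k
          + Kker (|x + 1/(2*r)|) (1/(2*r)) y 0 k * fourierHat fmr k := by
    funext k; rw [hterm1 k, hterm2 k]
  refine ⟨by rw [hL1]; exact hP1a, by rw [hL2]; exact hP2a, by rw [hR]; exact hP1b.add hP2b, ?_⟩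
  rw [hL1, hL2, hR]
  rw [show (∫ t : ℝ,
      ((Real.log ((|x - 1/(2*R)|)^2 + (y - t)^2) - Real.log ((1/(2*R))^2 + t^2) : ℝ) : ℂ)
        * fR t) = -∫ k : ℝ, Kker (|x - 1/(2*R)|) (1/(2*R)) y 0 k * fourierHat fR k from hP1c]
  rw [show (∫ t : ℝ,
      ((Real.log ((|x + 1/(2*r)|)^2 + (y - t)^2) - Real.log ((1/(2*r))^2 + t^2) : ℝ) : ℂ)
        * fmr t) = -∫ k : ℝ, Kker (|x + 1/(2*r)|) (1/(2*r)) y 0 k * fourierHat fmr k from hP2c]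
  rw [integral_add hP1b hP2b]
  ring
end
end

section
/- Let R, r > 0 and q₁ = 1/(2R) + 1/(2r). Let f_R, f_{-r} ∈ L¹(ℝ;ℂ) with ∫ f_R + ∫ f_{-r} = 0, and define G_R(y) = -(1/(2π)) ∫_ℝ (q₁/(q₁² + (y-t)²)) f_{-r}(t) dt and G_{-r}(y) = -(1/(2π)) ∫_ℝ (q₁/(q₁² + (y-t)²)) f_R(t) dt. Then for every k ∈ ℝ, Ĝ_R(k) = -(1/2) e^{-q₁|k|} f̂_{-r}(k) and Ĝ_{-r}(k) = -(1/2) e^{-q₁|k|} f̂_R(k); in diagonalized form, (Ĝ_{-r} - Ĝ_R)/√2 = (1/2) e^{-q₁|k|} (f̂_{-r} - f̂_R)/√2 and (Ĝ_{-r} + Ĝ_R)/√2 = -(1/2) e^{-q₁|k|} (f̂_{-r} + f̂_R)/√2. -/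
open MeasureTheory Set Real

open scoped FourierTransform

noncomputable section

namespace TouchingDisksAux

lemma integrableOn_cexp_Ioi {c : ℂ} (hc : c.re < 0) :
    IntegrableOn (fun t : ℝ ↦ Complex.exp (c * t)) (Ioi (0:ℝ)) := by
  refine Integrable.mono' (exp_neg_integrableOn_Ioi 0 (neg_pos.2 hc))
    (Continuous.aestronglyMeasurable (by fun_prop)).restrict ?_
  filter_upwards with t
  rw [Complex.norm_exp]
  simp [Complex.mul_re, neg_mul]

lemma integral_cexp_Ioi {c : ℂ} (hc : c.re < 0) :
    ∫ t in Ioi (0:ℝ), Complex.exp (c * t) = -1/c := by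
  have hc0 : c ≠ 0 := fun h => by simp [h] at hc
  have key := intervalIntegral_tendsto_integral_Ioi 0 (integrableOn_cexp_Ioi hc) Filter.tendsto_id
  have h2 : Filter.Tendsto (fun b : ℝ ↦ ∫ t in (0:ℝ)..b, Complex.exp (c * t))
      Filter.atTop (nhds (-1/c)) := by
    have heq : ∀ b : ℝ, ∫ t in (0:ℝ)..b, Complex.exp (c * t)
        = (Complex.exp (c * b) - 1) / c := by
      intro b; rw [integral_exp_mul_complex hc0]; simp
    simp_rw [heq]
    have hlim : Filter.Tendsto (fun b : ℝ ↦ Complex.exp (c * b)) Filter.atTop (nhds 0) := by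
      rw [tendsto_zero_iff_norm_tendsto_zero]
      have : ∀ b : ℝ, ‖Complex.exp (c * b)‖ = Real.exp (-((-c.re) * b)) := by
        intro b
        rw [Complex.norm_exp]
        simp [Complex.mul_re, neg_mul]
      simp_rw [this]
      have h1 : Filter.Tendsto (fun b : ℝ ↦ -c.re * b) Filter.atTop Filter.atTop :=
        Filter.Tendsto.const_mul_atTop (by linarith) Filter.tendsto_id
      exact Real.tendsto_exp_atBot.comp (Filter.tendsto_neg_atTop_atBot.comp h1)
    have := ((hlim.sub_const 1).div_const c)
    simpa using this
  exact tendsto_nhds_unique key h2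

lemma integrableOn_Iic_comp_neg {E : Type*} [NormedAddCommGroup E] {f : ℝ → E}
    (h : IntegrableOn (fun t ↦ f (-t)) (Ici (0:ℝ))) :
    IntegrableOn f (Iic (0:ℝ)) := by
  have h_map_neg : ((volume : Measure ℝ).restrict (Ici 0)).map Neg.neg
      = (volume : Measure ℝ).restrict (Iic 0) := by
    conv => rhs; rw [← Measure.map_neg_eq_self (volume : Measure ℝ),
      measurableEmbedding_neg.restrict_map]
    simp
  rw [IntegrableOn, ← h_map_neg, measurableEmbedding_neg.integrable_map_iff]
  exact h

lemma integrableOn_E_Ioi {q : ℝ} (hq : 0 < q) (ω : ℝ) :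
    IntegrableOn (fun t : ℝ ↦ Complex.exp (Complex.I * ω * t) * (Real.exp (-(q * |t|)) : ℂ))
      (Ioi (0:ℝ)) := by
  refine (integrableOn_cexp_Ioi (c := Complex.I * ω - q) (by simp [hq])).congr_fun
    (fun t ht => ?_) measurableSet_Ioi
  rw [abs_of_pos (mem_Ioi.1 ht), Complex.ofReal_exp, ← Complex.exp_add]
  congr 1
  push_cast
  ring

lemma setIntegral_E_Ioi {q : ℝ} (hq : 0 < q) (ω : ℝ) :
    ∫ t in Ioi (0:ℝ), Complex.exp (Complex.I * ω * t) * (Real.exp (-(q * |t|)) : ℂ)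
      = -1 / (Complex.I * ω - q) := by
  rw [setIntegral_congr_fun measurableSet_Ioi (g := fun t : ℝ ↦ Complex.exp ((Complex.I * ω - q) * t))
    (fun t ht => ?_), integral_cexp_Ioi (by simp [hq])]
  rw [abs_of_pos (mem_Ioi.1 ht), Complex.ofReal_exp, ← Complex.exp_add]
  congr 1
  push_cast
  ring

lemma E_integrable {q : ℝ} (hq : 0 < q) (ω : ℝ) :
    Integrable (fun t : ℝ ↦ Complex.exp (Complex.I * ω * t) * (Real.exp (-(q * |t|)) : ℂ)) := by
  rw [← integrableOn_univ, ← Iic_union_Ioi (a := (0:ℝ)), integrableOn_union]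
  constructor
  · apply integrableOn_Iic_comp_neg
    rw [integrableOn_Ici_iff_integrableOn_Ioi]
    refine (integrableOn_E_Ioi hq (-ω)).congr_fun (fun t _ => ?_) measurableSet_Ioi
    push_cast
    rw [abs_neg]
    ring_nf
  · exact integrableOn_E_Ioi hq ω

lemma integral_E {q : ℝ} (hq : 0 < q) (ω : ℝ) :
    ∫ t : ℝ, Complex.exp (Complex.I * ω * t) * (Real.exp (-(q * |t|)) : ℂ)
      = ((2*q/(q^2+ω^2) : ℝ) : ℂ) := by
  set E : ℝ → ℂ := fun t ↦ Complex.exp (Complex.I * ω * t) * (Real.exp (-(q * |t|)) : ℂ) with hE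
  have hIic : ∫ t in Iic (0:ℝ), E t = -1 / (Complex.I * ((-ω : ℝ) : ℂ) - q) := by
    have hneg := integral_comp_neg_Ioi (0:ℝ) E
    rw [neg_zero] at hneg
    rw [← hneg, ← setIntegral_E_Ioi hq (-ω)]
    refine setIntegral_congr_fun measurableSet_Ioi (fun t _ => ?_)
    simp only [hE, abs_neg]
    push_cast
    ring_nf
  rw [← intervalIntegral.integral_Iic_add_Ioi ((E_integrable hq ω).integrableOn)
    ((E_integrable hq ω).integrableOn), hIic, setIntegral_E_Ioi hq ω]
  have h1 : (Complex.I * ω - q) ≠ 0 := by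
    intro h
    have := congrArg Complex.re h
    simp [Complex.sub_re, Complex.mul_re] at this
    linarith
  have h2 : (Complex.I * (-ω : ℝ) - q) ≠ 0 := by
    intro h
    have := congrArg Complex.re h
    simp [Complex.sub_re, Complex.mul_re] at this
    linarith
  have h3 : ((q^2 + ω^2 : ℝ) : ℂ) ≠ 0 :=
    Complex.ofReal_ne_zero.2 (ne_of_gt (by positivity))
  push_cast at h3 h2 h1 ⊢
  rw [div_add_div _ _ h2 h1, div_eq_div_iff (mul_ne_zero h2 h1) h3]
  push_cast
  linear_combination (2*(q:ℂ)*(ω:ℂ)^2) * Complex.I_sq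

/-- The two-sided exponential. -/
def gq (q : ℝ) : ℝ → ℂ := fun t ↦ (Real.exp (-(q * |t|)) : ℂ)

lemma gq_integrable {q : ℝ} (hq : 0 < q) : Integrable (gq q) := by
  refine (E_integrable hq 0).congr (Filter.Eventually.of_forall (fun t => ?_))
  simp [gq]

lemma fourier_gq {q : ℝ} (hq : 0 < q) (ξ : ℝ) :
    𝓕 (gq q) ξ = ((2*q/(q^2+(2*π*ξ)^2) : ℝ) : ℂ) := by
  rw [Real.fourier_real_eq_integral_exp_smul]
  have hc : ∀ v : ℝ, Complex.exp (↑(-2 * π * v * ξ) * Complex.I) • gq q v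
      = Complex.exp (Complex.I * ((-(2*π*ξ) : ℝ) : ℂ) * v) * (Real.exp (-(q * |v|)) : ℂ) := by
    intro v
    rw [smul_eq_mul, gq]
    have harg : (↑(-2 * π * v * ξ) * Complex.I : ℂ)
        = Complex.I * ((-(2*π*ξ) : ℝ) : ℂ) * v := by push_cast; ring
    rw [harg]
  rw [integral_congr_ae (Filter.Eventually.of_forall hc), integral_E hq (-(2*π*ξ))]
  norm_num

lemma cauchy_integrable {q : ℝ} (hq : 0 < q) :
    Integrable (fun t : ℝ ↦ q / (q^2 + t^2)) := by
  have h := (integrable_inv_one_add_sq.comp_div (ne_of_gt hq)).const_mul q⁻¹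
  refine h.congr (Filter.Eventually.of_forall (fun t => ?_))
  have hq2 : q^2 + t^2 > 0 := by positivity
  field_simp

lemma fourier_gq_integrable {q : ℝ} (hq : 0 < q) : Integrable (𝓕 (gq q)) := by
  have heq : 𝓕 (gq q) = fun ξ : ℝ ↦ ((2*q/(q^2+(2*π*ξ)^2) : ℝ) : ℂ) :=
    funext (fourier_gq hq)
  rw [heq]
  have h := ((cauchy_integrable hq).comp_mul_left' (R := 2*π)
    (by positivity : (2*π : ℝ) ≠ 0)).const_mul 2
  have hreal : Integrable (fun ξ : ℝ ↦ 2*q/(q^2+(2*π*ξ)^2)) := by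
    refine h.congr (Filter.Eventually.of_forall (fun ξ => ?_))
    simp only []
    rw [mul_div_assoc]
  exact hreal.ofReal

lemma integral_cauchy_cexp {q : ℝ} (hq : 0 < q) (x : ℝ) :
    ∫ u : ℝ, Complex.exp (Complex.I * x * u) * ((2*q/(q^2+u^2) : ℝ) : ℂ)
      = ((2 * π * Real.exp (-(q * |x|)) : ℝ) : ℂ) := by
  have hcont : Continuous (gq q) := by
    unfold gq; fun_prop
  have hinv := (gq_integrable hq).fourierInv_fourier_eq (fourier_gq_integrable hq)
    (v := x) hcont.continuousAt
  rw [Real.fourierInv_eq'] at hinv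
  simp only [RCLike.inner_apply, starRingEnd_apply, star_trivial] at hinv
  set Φ : ℝ → ℂ := fun u ↦ Complex.exp (Complex.I * x * u) * ((2*q/(q^2+u^2) : ℝ) : ℂ) with hΦ
  have hcongr : ∀ ξ : ℝ, Complex.exp (↑(2 * π * (x * ξ)) * Complex.I) • 𝓕 (gq q) ξ
      = Φ (2*π*ξ) := by
    intro ξ
    rw [smul_eq_mul, fourier_gq hq, hΦ]
    have harg : (↑(2 * π * (x * ξ)) * Complex.I : ℂ)
        = Complex.I * (x : ℂ) * ((2*π*ξ : ℝ) : ℂ) := by push_cast; ring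
    rw [harg]
  rw [integral_congr_ae (Filter.Eventually.of_forall hcongr),
    MeasureTheory.Measure.integral_comp_mul_left Φ (2*π)] at hinv
  rw [abs_of_pos (by positivity : (0:ℝ) < (2*π)⁻¹)] at hinv
  have h2 : ∫ u : ℝ, Φ u = (2*π : ℝ) • ((gq q) x) := by
    rw [← hinv, smul_smul, mul_inv_cancel₀ (by positivity : (2*π:ℝ) ≠ 0), one_smul]
  rw [hΦ] at h2
  rw [h2, gq]
  rw [Complex.real_smul]
  push_cast
  ring

lemma cauchy_fourier {q : ℝ} (hq : 0 < q) (k : ℝ) :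
    ∫ u : ℝ, ((q / (q^2 + u^2) : ℝ) : ℂ) * Complex.exp (-(Complex.I * k * u))
      = ((π * Real.exp (-(q * |k|)) : ℝ) : ℂ) := by
  have h := integral_cauchy_cexp hq (-k)
  rw [abs_neg] at h
  have hcongr : ∀ u : ℝ, Complex.exp (Complex.I * ((-k : ℝ) : ℂ) * u) * ((2*q/(q^2+u^2) : ℝ) : ℂ)
      = 2 * (((q / (q^2 + u^2) : ℝ) : ℂ) * Complex.exp (-(Complex.I * k * u))) := by
    intro u
    have harg : (Complex.I * ((-k : ℝ) : ℂ) * u : ℂ) = -(Complex.I * k * u) := by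
      push_cast; ring
    rw [harg]
    push_cast
    ring
  rw [integral_congr_ae (Filter.Eventually.of_forall hcongr), integral_const_mul] at h
  have h3 : ((2 * π * rexp (-(q*|k|)) : ℝ) : ℂ)
      = 2 * ((π * rexp (-(q*|k|)) : ℝ) : ℂ) := by push_cast; ring
  rw [h3] at h
  exact mul_left_cancel₀ two_ne_zero h

end TouchingDisksAux

/-- The negative Poisson-kernel convolution
`-(1/(2π)) ∫ q₁/(q₁² + (y-t)²) f(t) dt`. -/
def negPoissonConv (q₁ : ℝ) (f : ℝ → ℂ) (y : ℝ) : ℂ :=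
  -((1/(2*π) : ℝ) : ℂ) * ∫ t : ℝ, ((q₁ / (q₁^2 + (y - t)^2) : ℝ) : ℂ) * f t

open TouchingDisksAux in
set_option maxHeartbeats 1000000 in
lemma main_conv {q : ℝ} (hq : 0 < q) {f : ℝ → ℂ} (hf : Integrable f) (k : ℝ) :
    fourierHat (negPoissonConv q f) k
      = -((1/2 * Real.exp (-(q * |k|)) : ℝ) : ℂ) * fourierHat f k := by
  set K : ℝ → ℂ := fun u ↦ ((q / (q^2 + u^2) : ℝ) : ℂ) with hK
  have hKint : Integrable K := (cauchy_integrable hq).ofReal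
  set e : ℝ → ℂ := fun y ↦ Complex.exp (-(Complex.I * k * y)) with he
  have hbd : ∀ y : ℝ, ‖e y‖ = 1 := by
    intro y
    rw [he]
    simp only [Complex.norm_exp]
    norm_num [Complex.mul_re]
  have hconv : Integrable (fun p : ℝ × ℝ ↦ f p.2 * K (p.1 - p.2))
      ((volume : Measure ℝ).prod (volume : Measure ℝ)) :=
    hf.convolution_integrand (ContinuousLinearMap.mul ℂ ℂ) hKint
  have hecont : Continuous (fun p : ℝ × ℝ ↦ e p.1) := by
    rw [he]; fun_prop
  have hint2 : Integrable (fun p : ℝ × ℝ ↦ e p.1 * (f p.2 * K (p.1 - p.2)))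
      ((volume : Measure ℝ).prod (volume : Measure ℝ)) :=
    hconv.bdd_mul hecont.aestronglyMeasurable (Filter.Eventually.of_forall fun p => le_of_eq (hbd p.1))
  set F : ℝ → ℝ → ℂ := fun y t ↦ K (y - t) * f t * e y with hF
  have hintF : Integrable (Function.uncurry F)
      ((volume : Measure ℝ).prod (volume : Measure ℝ)) := by
    refine hint2.congr (Filter.Eventually.of_forall (fun p => ?_))
    simp only [Function.uncurry, hF]
    ring
  have hswap : (∫ y : ℝ, ∫ t : ℝ, F y t) = ∫ t : ℝ, ∫ y : ℝ, F y t :=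
    integral_integral_swap hintF
  have hinner : ∀ t : ℝ, (∫ y : ℝ, F y t)
      = f t * (((π * Real.exp (-(q * |k|)) : ℝ) : ℂ) * e t) := by
    intro t
    have h1 : (fun y : ℝ => F y t) = fun y : ℝ => f t * (K (y - t) * e y) :=
      funext fun y => by rw [hF]; ring
    rw [h1, integral_const_mul]
    congr 1
    have hshift := MeasureTheory.integral_add_right_eq_self (μ := volume)
      (fun y : ℝ => K (y - t) * e y) t
    rw [← hshift]
    have h2 : (fun u : ℝ => K (u + t - t) * e (u + t))
        = fun u : ℝ => (K u * e u) * e t := by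
      funext u
      have harg : (-(Complex.I * (k:ℂ) * ((u + t : ℝ) : ℂ)) : ℂ)
          = -(Complex.I * (k:ℂ) * (u:ℂ)) + -(Complex.I * (k:ℂ) * (t:ℂ)) := by
        push_cast; ring
      rw [add_sub_cancel_right, he]
      simp only
      rw [harg, Complex.exp_add]
      exact (mul_assoc _ _ _).symm
    rw [h2, integral_mul_const]
    congr 1
    exact cauchy_fourier hq k
  have hfinal : (∫ t : ℝ, f t * (((π * Real.exp (-(q * |k|)) : ℝ) : ℂ) * e t))
      = ((π * Real.exp (-(q * |k|)) : ℝ) : ℂ) * fourierHat f k := by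
    rw [fourierHat, ← integral_const_mul]
    congr 1
    funext t
    rw [he]
    ring
  have hout : fourierHat (negPoissonConv q f) k
      = -((1/(2*π) : ℝ) : ℂ) * ∫ y : ℝ, ∫ t : ℝ, F y t := by
    rw [fourierHat, ← integral_const_mul]
    congr 1
    funext y
    rw [negPoissonConv, hF]
    rw [show (∫ t : ℝ, K (y - t) * f t * e y) = (∫ t : ℝ, K (y - t) * f t) * e y from
      integral_mul_const _ _]
    ring
  rw [hout, hswap]
  rw [show (∫ t : ℝ, ∫ y : ℝ, F y t)
      = ((π * Real.exp (-(q * |k|)) : ℝ) : ℂ) * fourierHat f k from by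
    rw [← hfinal]; exact integral_congr_ae (Filter.Eventually.of_forall hinner)]
  have hπ : (π : ℂ) ≠ 0 := by exact_mod_cast Real.pi_ne_zero
  push_cast
  field_simp

/-- Frequency-domain realization of the Neumann–Poincaré operator of
the touching-disks domain (`q₁ = 1/(2R) + 1/(2r)`): for mean-zero `f_R, f_{-r} ∈ L¹`,
the weighted boundary values `G_R = -(P_{q₁} * f_{-r})` and `G_{-r} = -(P_{q₁} * f_R)`
satisfy `Ĝ_R(k) = -(1/2)e^{-q₁|k|} f̂_{-r}(k)` and `Ĝ_{-r}(k) = -(1/2)e^{-q₁|k|} f̂_R(k)`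
for all `k`; in diagonalized form
`(Ĝ_{-r} - Ĝ_R)/√2 = (1/2)e^{-q₁|k|}(f̂_{-r} - f̂_R)/√2` and
`(Ĝ_{-r} + Ĝ_R)/√2 = -(1/2)e^{-q₁|k|}(f̂_{-r} + f̂_R)/√2`. -/
theorem touchingDisks_NP_frequency_realization
    (R r : ℝ) (hR : 0 < R) (hr : 0 < r)
    (fR fmr : ℝ → ℂ) (hfR : Integrable fR) (hfmr : Integrable fmr)
    (hmean : (∫ t : ℝ, fR t) + (∫ t : ℝ, fmr t) = 0) :
    ∀ k : ℝ,
      fourierHat (negPoissonConv (1/(2*R) + 1/(2*r)) fmr) k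
        = -((1/2 * Real.exp (-((1/(2*R) + 1/(2*r)) * |k|)) : ℝ) : ℂ) * fourierHat fmr k ∧
      fourierHat (negPoissonConv (1/(2*R) + 1/(2*r)) fR) k
        = -((1/2 * Real.exp (-((1/(2*R) + 1/(2*r)) * |k|)) : ℝ) : ℂ) * fourierHat fR k ∧
      (fourierHat (negPoissonConv (1/(2*R) + 1/(2*r)) fR) k
          - fourierHat (negPoissonConv (1/(2*R) + 1/(2*r)) fmr) k) / ((Real.sqrt 2 : ℝ) : ℂ)
        = ((1/2 * Real.exp (-((1/(2*R) + 1/(2*r)) * |k|)) : ℝ) : ℂ) *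
            ((fourierHat fmr k - fourierHat fR k) / ((Real.sqrt 2 : ℝ) : ℂ)) ∧
      (fourierHat (negPoissonConv (1/(2*R) + 1/(2*r)) fR) k
          + fourierHat (negPoissonConv (1/(2*R) + 1/(2*r)) fmr) k) / ((Real.sqrt 2 : ℝ) : ℂ)
        = -((1/2 * Real.exp (-((1/(2*R) + 1/(2*r)) * |k|)) : ℝ) : ℂ) *
            ((fourierHat fmr k + fourierHat fR k) / ((Real.sqrt 2 : ℝ) : ℂ)) := by
  intro k
  have hq : 0 < 1/(2*R) + 1/(2*r) := by positivity
  have h1 := main_conv hq hfmr k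
  have h2 := main_conv hq hfR k
  refine ⟨h1, h2, ?_, ?_⟩ <;> rw [h1, h2] <;> push_cast <;> ring

end
end
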